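/- Let α > 0, β > 0 and a, b ∈ ℝ. Then ∫_0^∞ Φ(a√v + b) · (β^α / Γ(α)) v^{α−1} e^{−β v} dv = P( (Z − b) / √(W/(2α)) ≤ a √(α/β) ), where Z and W are independent random variables with Z standard normal and W Gamma-distributed with shape α and rate 1/2 (i.e., chi-square with 2α degrees of freedom), so that (Z − b)/√(W/(2α)) is a noncentral Student-t random variable with 2α degrees of freedom and noncentrality parameter −b. -/

import Mathlib

open MeasureTheory ProbabilityTheory Real Set

/-- The standard normal cumulative distribution function `Φ`. -/
noncomputable def stdNormCdf (x : ℝ) : ℝ :=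
  ∫ t in Set.Iic x, (2 * Real.pi) ^ (-(1 : ℝ) / 2) * Real.exp (-t ^ 2 / 2)

lemma stdNormCdf_eq_gauss (x : ℝ) :
    stdNormCdf x = ∫ t in Set.Iic x, gaussianPDFReal 0 1 t := by
  unfold stdNormCdf gaussianPDFReal
  refine setIntegral_congr_fun measurableSet_Iic fun t _ => ?_
  have h : ((2:ℝ) * π) ^ (-(1 : ℝ) / 2) = (Real.sqrt (2 * π))⁻¹ := by
    rw [Real.sqrt_eq_rpow, ← Real.rpow_neg (by positivity)]
    norm_num
  simp [h]

lemma gaussianReal_Iic (x : ℝ) :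
    gaussianReal 0 1 (Set.Iic x) = ENNReal.ofReal (stdNormCdf x) := by
  rw [gaussianReal_apply_eq_integral 0 one_ne_zero, stdNormCdf_eq_gauss]

lemma stdNormCdf_nonneg (x : ℝ) : 0 ≤ stdNormCdf x :=
  setIntegral_nonneg measurableSet_Iic fun t _ => by positivity

lemma stdNormCdf_eq_toReal (x : ℝ) :
    stdNormCdf x = (gaussianReal 0 1 (Set.Iic x)).toReal := by
  rw [gaussianReal_Iic, ENNReal.toReal_ofReal (stdNormCdf_nonneg x)]

lemma monotone_stdNormCdf : Monotone stdNormCdf := by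
  intro x y hxy
  rw [stdNormCdf_eq_toReal, stdNormCdf_eq_toReal]
  exact ENNReal.toReal_mono (measure_ne_top _ _)
    (measure_mono (Set.Iic_subset_Iic.2 hxy))

lemma measurable_stdNormCdf : Measurable stdNormCdf :=
  monotone_stdNormCdf.measurable

theorem stmt4 (α β a b : ℝ) (hα : 0 < α) (hβ : 0 < β) :
    ∫ v in Set.Ioi (0 : ℝ),
        stdNormCdf (a * Real.sqrt v + b) * gammaPDFReal α β v
      = (((gaussianReal 0 1).prod (gammaMeasure α (1 / 2)))
          {zw : ℝ × ℝ | (zw.1 - b) / Real.sqrt (zw.2 / (2 * α))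
            ≤ a * Real.sqrt (α / β)}).toReal := by
  have h2β : (0:ℝ) < 2 * β := by positivity
  have hhalf : (0:ℝ) < 1/2 := by norm_num
  set S : Set (ℝ × ℝ) := {zw : ℝ × ℝ | (zw.1 - b) / Real.sqrt (zw.2 / (2 * α))
      ≤ a * Real.sqrt (α / β)} with hSdef
  have hS : MeasurableSet S := by
    apply measurableSet_le _ measurable_const
    fun_prop
  set F : ℝ → ℝ := fun w => stdNormCdf (a * Real.sqrt (w / (2 * β)) + b) with hFdef
  have hFmeas : Measurable F := by
    apply measurable_stdNormCdf.comp
    fun_prop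
  set g : ℝ → ℝ := fun w => F w * gammaPDFReal α (1/2) w with hgdef
  -- slices
  have hslice : ∀ w : ℝ, 0 < w →
      ((fun z => (z, w)) ⁻¹' S) = Set.Iic (a * Real.sqrt (w / (2 * β)) + b) := by
    intro w hw
    ext z
    simp only [hSdef, Set.mem_preimage, Set.mem_setOf_eq, Set.mem_Iic]
    have hs : 0 < Real.sqrt (w / (2 * α)) := Real.sqrt_pos.2 (by positivity)
    rw [div_le_iff₀ hs]
    have key : a * Real.sqrt (α / β) * Real.sqrt (w / (2 * α))
        = a * Real.sqrt (w / (2 * β)) := by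
      rw [mul_assoc, ← Real.sqrt_mul (by positivity)]
      congr 2
      field_simp
    rw [key]
    constructor <;> intro h <;> linarith
  -- the gamma measure gives no mass to Iic 0
  have hν : gammaMeasure α (1/2) = volume.withDensity (gammaPDF α (1/2)) := rfl
  have hnull : gammaMeasure α (1/2) (Set.Iic 0) = 0 := by
    rw [hν, withDensity_apply _ measurableSet_Iic,
      lintegral_Iic_eq_lintegral_Iio_add_Icc _ le_rfl,
      lintegral_gammaPDF_of_nonpos le_rfl, Set.Icc_self,
      setLIntegral_measure_zero _ _ (by simp), zero_add]
  have hae : ∀ᵐ w ∂(gammaMeasure α (1/2)), 0 < w := by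
    rw [ae_iff]
    have : {w : ℝ | ¬ 0 < w} = Set.Iic 0 := by ext w; simp
    rw [this]
    exact hnull
  haveI : IsProbabilityMeasure (gammaMeasure α (1/2)) := isProbabilityMeasure_gammaMeasure hα hhalf
  have hpdfm : Measurable (gammaPDF α (1/2)) := by
    unfold gammaPDF; exact (measurable_gammaPDFReal _ _).ennreal_ofReal
  -- compute the product measure
  have key : ((gaussianReal 0 1).prod (gammaMeasure α (1/2))) S
      = ∫⁻ w in Set.Ioi (0:ℝ), ENNReal.ofReal (g w) := by
    rw [Measure.prod_apply_symm hS]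
    have e1 : ∫⁻ w, gaussianReal 0 1 ((fun z => (z, w)) ⁻¹' S) ∂(gammaMeasure α (1/2))
        = ∫⁻ w, ENNReal.ofReal (F w) ∂(gammaMeasure α (1/2)) := by
      refine lintegral_congr_ae (hae.mono fun w hw => ?_)
      show (gaussianReal 0 1) ((fun z => (z, w)) ⁻¹' S) = ENNReal.ofReal (F w)
      rw [hslice w hw, gaussianReal_Iic]
    rw [e1, hν, lintegral_withDensity_eq_lintegral_mul _ hpdfm hFmeas.ennreal_ofReal]
    have e2 : ∫⁻ w, (gammaPDF α (1/2) * fun w => ENNReal.ofReal (F w)) w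
        = (∫⁻ w in Set.Ioi (0:ℝ), (gammaPDF α (1/2) * fun w => ENNReal.ofReal (F w)) w)
          + ∫⁻ w in Set.Iic (0:ℝ), (gammaPDF α (1/2) * fun w => ENNReal.ofReal (F w)) w := by
      rw [← lintegral_add_compl _ measurableSet_Ioi (μ := volume)]
      congr 1
      · rw [Set.compl_Ioi]
    rw [e2]
    have e3 : ∫⁻ w in Set.Iic (0:ℝ), (gammaPDF α (1/2) * fun w => ENNReal.ofReal (F w)) w
        = 0 := by
      rw [← setLIntegral_congr Iio_ae_eq_Iic,
        setLIntegral_congr_fun (g := fun _ => (0:ENNReal)) measurableSet_Iio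
          (fun (w : ℝ) (hw : w < 0) => by
            simp [Pi.mul_apply, gammaPDF_of_neg hw])]
      simp
    rw [e3, add_zero]
    refine setLIntegral_congr_fun measurableSet_Ioi (fun w hw => ?_)
    simp only [Pi.mul_apply, hgdef, gammaPDF]
    rw [← ENNReal.ofReal_mul (gammaPDFReal_nonneg hα hhalf w), mul_comm]
  -- convert to a real integral
  rw [key, ← integral_eq_lintegral_of_nonneg_ae
    (ae_of_all _ fun w => mul_nonneg (stdNormCdf_nonneg _) (gammaPDFReal_nonneg hα hhalf w))
    (hFmeas.mul (measurable_gammaPDFReal _ _)).aestronglyMeasurable]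
  -- change of variables w = 2βv
  have hsub := integral_comp_mul_left_Ioi g 0 h2β
  rw [mul_zero] at hsub
  have hsub' : ∫ w in Set.Ioi (0:ℝ), g w
      = ∫ v in Set.Ioi (0:ℝ), (2 * β) * g ((2 * β) * v) := by
    rw [integral_const_mul, hsub, smul_eq_mul, ← mul_assoc, mul_inv_cancel₀ h2β.ne', one_mul]
  rw [hsub']
  refine setIntegral_congr_fun measurableSet_Ioi fun v hv => ?_
  have hv' : (0:ℝ) < v := hv
  -- pointwise identity
  have hFv : F ((2 * β) * v) = stdNormCdf (a * Real.sqrt v + b) := by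
    simp only [hFdef]
    rw [mul_div_cancel_left₀ v h2β.ne']
  have hpdf : (2 * β) * gammaPDFReal α (1/2) ((2 * β) * v) = gammaPDFReal α β v := by
    unfold gammaPDFReal
    rw [if_pos (by positivity : (0:ℝ) ≤ (2*β)*v), if_pos hv'.le]
    have h2 : ((2 * β) * v) ^ (α - 1) = (2 * β) ^ (α - 1) * v ^ (α - 1) :=
      Real.mul_rpow h2β.le hv'.le
    have h3 : (1/2:ℝ) ^ α * ((2 * β) ^ (α - 1) * (2 * β)) = β ^ α := by
      rw [← Real.rpow_add_one h2β.ne' (α - 1), sub_add_cancel,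
        ← Real.mul_rpow (by norm_num) h2β.le]
      congr 1
      ring
    have he : -((1/2:ℝ) * ((2 * β) * v)) = -(β * v) := by ring
    rw [h2, he, ← h3]
    ring
  simp only [hgdef]
  rw [hFv, ← hpdf]
  ring
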